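/- Let (A, X, I) be a formal context with X finite, let S₁, S₂ ⊆ X × X be substitution relations, let m₁, m₂ be mass functions on X, and let β ∈ [0,1]. Then for every B ⊆ A, if B ∈ ℙ(m₁ ∩_S m₂, β) then B ∈ ℙ(m₁ ∪_S m₂, β). -/
import Mathlib


/-- `Y`-restricted upward derivation operator of a formal context `(A, X, I)`:
`B↑_Y = {x ∈ Y | ∀ a ∈ B, (a,x) ∈ I}`. -/
def fcaUp {A X : Type*} (I : Set (A × X)) (Y : Set X) (B : Set A) : Set X :=
  {x ∈ Y | ∀ a ∈ B, (a, x) ∈ I}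

/-- Downward derivation operator: `Z↓ = {a ∈ A | ∀ x ∈ Z, (a,x) ∈ I}`. -/
def fcaDown {A X : Type*} (I : Set (A × X)) (Z : Set X) : Set A :=
  {a | ∀ x ∈ Z, (a, x) ∈ I}

/-- `B ⊆ A` is Galois-stable with respect to `Y ⊆ X` if `(B↑_Y)↓ = B`. -/
def GaloisStable {A X : Type*} (I : Set (A × X)) (Y : Set X) (B : Set A) : Prop :=
  fcaDown I (fcaUp I Y B) = B

/-- A (Dempster–Shafer) mass function on a finite set `X`: a nonnegative real-valued
function on subsets of `X` summing to `1`. -/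
def IsMassFunction {X : Type*} [Fintype X] (m : Finset X → ℝ) : Prop :=
  (∀ Y, 0 ≤ m Y) ∧ (∑ Y : Finset X, m Y = 1)

open scoped Classical in
/-- The stability index of `G ⊆ A`:
`ρ_m(G) = Σ { m(Y) : Y ⊆ X such that G is Galois-stable w.r.t. Y }`. -/
noncomputable def stabilityIndex {A X : Type*} [Fintype X] (I : Set (A × X))
    (m : Finset X → ℝ) (G : Set A) : ℝ :=
  ∑ Y : Finset X, if GaloisStable I (↑Y : Set X) G then m Y else 0

/-- The β-categorization `ℙ(m, β) = { (G↑_X)↓ : G ⊆ A with ρ_m(G) ≥ β }`. -/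
noncomputable def betaCategorization {A X : Type*} [Fintype X] (I : Set (A × X))
    (m : Finset X → ℝ) (β : ℝ) : Set (Set A) :=
  {B | ∃ G : Set A, β ≤ stabilityIndex I m G ∧ fcaDown I (fcaUp I Set.univ G) = B}

/-- The up-set restricted order: `m₁ ≤_↑ m₂` iff for every upward closed family `𝒱`
of subsets of `X`, `Σ_{Y ∈ 𝒱} m₁(Y) ≤ Σ_{Y ∈ 𝒱} m₂(Y)`. -/
def upLE {X : Type*} [Fintype X] (m₁ m₂ : Finset X → ℝ) : Prop :=
  ∀ V : Finset (Finset X), (∀ Y ∈ V, ∀ Z : Finset X, Y ⊆ Z → Z ∈ V) →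
    (∑ Y ∈ V, m₁ Y) ≤ ∑ Y ∈ V, m₂ Y

open scoped Classical in
/-- Substitution image of an agenda `Z ⊆ X` under a substitution relation `S ⊆ X × X`:
`Sub(Z) = {n | ∃ m ∈ Z, S(n,m)}`. -/
noncomputable def subImage {X : Type*} [Fintype X] (S : Set (X × X)) (Z : Finset X) :
    Finset X :=
  Finset.univ.filter fun n => ∃ m ∈ Z, (n, m) ∈ S

/-- Substitution-conjunctive combination:
`(m₁ ∩_S m₂)(Y) = Σ { m₁(Z₁)·m₂(Z₂) : Sub₂(Z₁) ∩ Sub₁(Z₂) = Y }`. -/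
noncomputable def substConj {X : Type*} [Fintype X] [DecidableEq X]
    (S₁ S₂ : Set (X × X)) (m₁ m₂ : Finset X → ℝ) (Y : Finset X) : ℝ :=
  ∑ p : Finset X × Finset X,
    if subImage S₂ p.1 ∩ subImage S₁ p.2 = Y then m₁ p.1 * m₂ p.2 else 0

/-- Substitution-disjunctive combination:
`(m₁ ∪_S m₂)(Y) = Σ { m₁(Z₁)·m₂(Z₂) : Sub₂(Z₁) ∪ Sub₁(Z₂) = Y }`. -/
noncomputable def substDisj {X : Type*} [Fintype X] [DecidableEq X]
    (S₁ S₂ : Set (X × X)) (m₁ m₂ : Finset X → ℝ) (Y : Finset X) : ℝ :=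
  ∑ p : Finset X × Finset X,
    if subImage S₂ p.1 ∪ subImage S₁ p.2 = Y then m₁ p.1 * m₂ p.2 else 0


open scoped Classical

lemma galoisStable_mono {A X : Type*} (I : Set (A × X)) {Y Z : Set X} (h : Y ⊆ Z)
    {G : Set A} (hG : GaloisStable I Y G) : GaloisStable I Z G := by
  apply Set.Subset.antisymm
  · intro a ha
    rw [← hG]
    intro x hx
    exact ha x ⟨h hx.1, hx.2⟩
  · intro a ha x hx
    exact hx.2 a ha

lemma stab_sum {A X : Type*} [Fintype X] [DecidableEq X] (I : Set (A × X)) (m₁ m₂ : Finset X → ℝ)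
    (f : Finset X × Finset X → Finset X) (G : Set A) :
    stabilityIndex I (fun Y => ∑ p : Finset X × Finset X,
        if f p = Y then m₁ p.1 * m₂ p.2 else 0) G
      = ∑ p : Finset X × Finset X,
        if GaloisStable I (↑(f p) : Set X) G then m₁ p.1 * m₂ p.2 else 0 := by
  unfold stabilityIndex
  rw [show (∑ Y : Finset X, if GaloisStable I (↑Y : Set X) G then
      (∑ p : Finset X × Finset X, if f p = Y then m₁ p.1 * m₂ p.2 else 0) else 0)
    = ∑ Y : Finset X, ∑ p : Finset X × Finset X,
      if f p = Y then (if GaloisStable I (↑Y : Set X) G then m₁ p.1 * m₂ p.2 else 0) else 0 from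
    Finset.sum_congr rfl fun Y _ => by split_ifs with h <;> simp [h]]
  rw [Finset.sum_comm]
  refine Finset.sum_congr rfl fun p _ => ?_
  rw [Finset.sum_ite_eq Finset.univ (f p)
    (fun Y => if GaloisStable I (↑Y : Set X) G then m₁ p.1 * m₂ p.2 else 0)]
  simp

/-- `B ∈ ℙ(m₁ ∩_S m₂, β)` implies `B ∈ ℙ(m₁ ∪_S m₂, β)`. -/
theorem betaCategorization_substConj_substDisj {A X : Type*} [Fintype X] [DecidableEq X]
    (I : Set (A × X)) (S₁ S₂ : Set (X × X)) (m₁ m₂ : Finset X → ℝ)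
    (h₁ : IsMassFunction m₁) (h₂ : IsMassFunction m₂)
    (β : ℝ) (h0 : 0 ≤ β) (hβ1 : β ≤ 1) (B : Set A)
    (hB : B ∈ betaCategorization I (substConj S₁ S₂ m₁ m₂) β) :
    B ∈ betaCategorization I (substDisj S₁ S₂ m₁ m₂) β := by
  obtain ⟨G, hρ, hG⟩ := hB
  refine ⟨G, le_trans hρ ?_, hG⟩
  unfold substConj substDisj
  rw [stab_sum I m₁ m₂ (fun p => subImage S₂ p.1 ∩ subImage S₁ p.2) G,
      stab_sum I m₁ m₂ (fun p => subImage S₂ p.1 ∪ subImage S₁ p.2) G]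
  refine Finset.sum_le_sum fun p _ => ?_
  have hnn : 0 ≤ m₁ p.1 * m₂ p.2 := mul_nonneg (h₁.1 _) (h₂.1 _)
  split_ifs with hc hd hd
  · exact le_refl _
  · exact absurd (galoisStable_mono I (by
      simp only [Finset.coe_inter, Finset.coe_union]
      exact (Set.inter_subset_left).trans Set.subset_union_left) hc) hd
  · exact hnn
  · exact le_refl _
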